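/- (Lindsey's lemma) Let M be the 2^m × 2^m matrix indexed by x, y ∈ {0,1}^m with entries M(x,y) = (-1)^{⟨x,y⟩} where ⟨x,y⟩ = Σ_i x_i y_i mod 2. Then for any rectangle R = A × B with A, B ⊆ {0,1}^m, |Σ_{x∈A, y∈B} M(x,y)| ≤ √(|A|·|B|·2^m). -/
import Mathlib

open Finset

lemma chi_prod {m : ℕ} (x y : Fin m → Bool) :
    (-1 : ℝ) ^ (∑ i : Fin m, if x i && y i then 1 else 0 : ℕ) =
      ∏ i : Fin m, (-1 : ℝ) ^ (if x i && y i then 1 else 0 : ℕ) := by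
  rw [← Finset.prod_pow_eq_pow_sum]

lemma orth {m : ℕ} (y y' : Fin m → Bool) :
    ∑ x : Fin m → Bool,
      ((-1 : ℝ) ^ (∑ i : Fin m, if x i && y i then 1 else 0 : ℕ) *
        (-1 : ℝ) ^ (∑ i : Fin m, if x i && y' i then 1 else 0 : ℕ)) =
      if y = y' then (2 : ℝ) ^ m else 0 := by
  have : ∀ x : Fin m → Bool,
      ((-1 : ℝ) ^ (∑ i : Fin m, if x i && y i then 1 else 0 : ℕ) *
        (-1 : ℝ) ^ (∑ i : Fin m, if x i && y' i then 1 else 0 : ℕ)) =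
      ∏ i : Fin m, ((-1 : ℝ) ^ (if x i && y i then 1 else 0 : ℕ) *
        (-1 : ℝ) ^ (if x i && y' i then 1 else 0 : ℕ)) := by
    intro x
    rw [Finset.prod_mul_distrib, chi_prod, chi_prod]
  simp_rw [this]
  rw [show (∑ x : Fin m → Bool, ∏ i : Fin m,
      ((-1 : ℝ) ^ (if x i && y i then 1 else 0 : ℕ) *
        (-1 : ℝ) ^ (if x i && y' i then 1 else 0 : ℕ))) =
      ∏ i : Fin m, ∑ b : Bool, ((-1 : ℝ) ^ (if b && y i then 1 else 0 : ℕ) *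
        (-1 : ℝ) ^ (if b && y' i then 1 else 0 : ℕ)) from
    (Fintype.prod_sum fun i b => ((-1 : ℝ) ^ (if b && y i then 1 else 0 : ℕ) *
        (-1 : ℝ) ^ (if b && y' i then 1 else 0 : ℕ))).symm]
  by_cases h : y = y'
  · subst h
    simp only [if_true]
    have : ∀ i : Fin m, ∑ b : Bool, ((-1 : ℝ) ^ (if b && y i then 1 else 0 : ℕ) *
        (-1 : ℝ) ^ (if b && y i then 1 else 0 : ℕ)) = 2 := by
      intro i; cases hy : y i <;> norm_num
    rw [Finset.prod_congr rfl fun i _ => this i]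
    simp
  · rw [if_neg h]
    obtain ⟨i, hi⟩ : ∃ i, y i ≠ y' i := by
      by_contra hc; push_neg at hc; exact h (funext hc)
    apply Finset.prod_eq_zero (Finset.mem_univ i)
    cases hy : y i <;> cases hy' : y' i <;> simp_all

theorem lindsey {m : ℕ} (A B : Finset (Fin m → Bool)) :
    |∑ x ∈ A, ∑ y ∈ B, (-1 : ℝ) ^ (∑ i : Fin m, if x i && y i then 1 else 0 : ℕ)| ≤
      Real.sqrt ((A.card : ℝ) * B.card * 2 ^ m) := by
  set f : (Fin m → Bool) → ℝ :=
    fun x => ∑ y ∈ B, (-1 : ℝ) ^ (∑ i : Fin m, if x i && y i then 1 else 0 : ℕ) with hf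
  have key : (∑ x ∈ A, f x) ^ 2 ≤ (A.card : ℝ) * B.card * 2 ^ m := by
    have h1 : (∑ x ∈ A, f x) ^ 2 ≤ (A.card : ℝ) * ∑ x ∈ A, f x ^ 2 := by
      have := sq_sum_le_card_mul_sum_sq (s := A) (f := f)
      exact_mod_cast this
    have h2 : ∑ x ∈ A, f x ^ 2 ≤ ∑ x : Fin m → Bool, f x ^ 2 :=
      Finset.sum_le_sum_of_subset_of_nonneg (Finset.subset_univ A)
        (fun x _ _ => sq_nonneg _)
    have h3 : ∑ x : Fin m → Bool, f x ^ 2 = (B.card : ℝ) * 2 ^ m := by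
      simp_rw [hf, sq, Finset.sum_mul_sum]
      rw [Finset.sum_comm]
      have : ∀ y ∈ B, ∑ x : Fin m → Bool, ∑ y' ∈ B,
          ((-1 : ℝ) ^ (∑ i : Fin m, if x i && y i then 1 else 0 : ℕ) *
            (-1 : ℝ) ^ (∑ i : Fin m, if x i && y' i then 1 else 0 : ℕ)) =
          (2 : ℝ) ^ m := by
        intro y hy
        rw [Finset.sum_comm]
        have : ∀ y' ∈ B, ∑ x : Fin m → Bool,
            ((-1 : ℝ) ^ (∑ i : Fin m, if x i && y i then 1 else 0 : ℕ) *
              (-1 : ℝ) ^ (∑ i : Fin m, if x i && y' i then 1 else 0 : ℕ)) =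
            if y = y' then (2 : ℝ) ^ m else 0 := fun y' _ => orth y y'
        rw [Finset.sum_congr rfl this, Finset.sum_ite_eq B y (fun _ => (2:ℝ)^m), if_pos hy]
      rw [Finset.sum_congr rfl this, Finset.sum_const, nsmul_eq_mul]
    calc (∑ x ∈ A, f x) ^ 2 ≤ (A.card : ℝ) * ∑ x ∈ A, f x ^ 2 := h1
      _ ≤ (A.card : ℝ) * ((B.card : ℝ) * 2 ^ m) := by
          apply mul_le_mul_of_nonneg_left _ (Nat.cast_nonneg _)
          rw [← h3]; exact h2
      _ = (A.card : ℝ) * B.card * 2 ^ m := by ring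
  have := Real.sqrt_le_sqrt key
  rwa [Real.sqrt_sq_eq_abs] at this
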